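/- Derivative of the stationary distribution: let n ≥ 1 and t₀ ∈ ℝ. Let P : ℝ → (n×n real matrices) and π : ℝ → ℝⁿ (regarded as row vectors) both be differentiable at t₀, with derivatives P′ and π′ at t₀. Assume there is a neighborhood U of t₀ such that for all t ∈ U: every row of P(t) sums to 1, the entries of π(t) sum to 1, and π(t)·P(t) = π(t). Let Π = 1·π(t₀) (the outer product of the all-ones column vector with the row vector π(t₀)), assume A = I − P(t₀) + Π is invertible, and set D = A⁻¹ − Π (the deviation matrix). Then π′ = π(t₀)·P′·D. -/

import Mathlib

open Matrix Finset

theorem stationary_distribution_derivative {n : ℕ} (hn : 1 ≤ n) (t0 : ℝ)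
    (P : ℝ → Matrix (Fin n) (Fin n) ℝ) (pi : ℝ → Fin n → ℝ)
    (P' : Matrix (Fin n) (Fin n) ℝ) (pi' : Fin n → ℝ)
    (hP : ∀ i j, HasDerivAt (fun t => P t i j) (P' i j) t0)
    (hpi : ∀ i, HasDerivAt (fun t => pi t i) (pi' i) t0)
    (U : Set ℝ) (hU : U ∈ nhds t0)
    (hrow : ∀ t ∈ U, ∀ i, ∑ j, P t i j = 1)
    (hsum : ∀ t ∈ U, ∑ i, pi t i = 1)
    (hstat : ∀ t ∈ U, Matrix.vecMul (pi t) (P t) = pi t)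
    (hA : IsUnit (1 - P t0 + Matrix.of fun _ j => pi t0 j))
    (D : Matrix (Fin n) (Fin n) ℝ)
    (hD : D = (1 - P t0 + Matrix.of fun _ j => pi t0 j)⁻¹
        - Matrix.of fun _ j => pi t0 j) :
    pi' = Matrix.vecMul (pi t0) (P' * D) := by
  set A : Matrix (Fin n) (Fin n) ℝ := 1 - P t0 + Matrix.of fun _ j => pi t0 j with hAdef
  -- row sums of P' are zero
  have hrowd : ∀ i, ∑ j, P' i j = 0 := by
    intro i
    have h1 : HasDerivAt (fun t => ∑ j, P t i j) (∑ j, P' i j) t0 :=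
      HasDerivAt.fun_sum fun j _ => hP i j
    have h2 : HasDerivAt (fun t => ∑ j, P t i j) 0 t0 := by
      refine (hasDerivAt_const t0 (1:ℝ)).congr_of_eventuallyEq ?_
      filter_upwards [hU] with t ht using hrow t ht i
    exact h1.unique h2
  have hsumd : ∑ i, pi' i = 0 := by
    have h1 : HasDerivAt (fun t => ∑ i, pi t i) (∑ i, pi' i) t0 :=
      HasDerivAt.fun_sum fun i _ => hpi i
    have h2 : HasDerivAt (fun t => ∑ i, pi t i) 0 t0 := by
      refine (hasDerivAt_const t0 (1:ℝ)).congr_of_eventuallyEq ?_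
      filter_upwards [hU] with t ht using hsum t ht
    exact h1.unique h2
  have hstatd : ∀ j, ∑ k, (pi' k * P t0 k j + pi t0 k * P' k j) = pi' j := by
    intro j
    have h1 : HasDerivAt (fun t => ∑ k, pi t k * P t k j)
        (∑ k, (pi' k * P t0 k j + pi t0 k * P' k j)) t0 :=
      HasDerivAt.fun_sum fun k _ => (hpi k).mul (hP k j)
    have h2 : HasDerivAt (fun t => ∑ k, pi t k * P t k j) (pi' j) t0 := by
      refine (hpi j).congr_of_eventuallyEq ?_
      filter_upwards [hU] with t ht
      have := congrFun (hstat t ht) j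
      simpa [Matrix.vecMul, dotProduct] using this
    exact h1.unique h2
  have key : Matrix.vecMul pi' A = Matrix.vecMul (pi t0) P' := by
    funext j
    have h := hstatd j
    simp only [Matrix.vecMul, dotProduct, hAdef, Matrix.add_apply,
      Matrix.sub_apply, Matrix.one_apply, Matrix.of_apply, mul_add, mul_sub,
      Finset.sum_add_distrib, Finset.sum_sub_distrib, mul_ite, mul_one, mul_zero,
      Finset.sum_ite_eq', Finset.mem_univ, if_true]
    rw [← Finset.sum_mul, hsumd, zero_mul, add_zero]
    rw [Finset.sum_add_distrib] at h
    linarith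
  have hdet : IsUnit A.det := (Matrix.isUnit_iff_isUnit_det A).mp hA
  have hinv : A * A⁻¹ = 1 := Matrix.mul_nonsing_inv A hdet
  have hpi'eq : pi' = Matrix.vecMul (Matrix.vecMul (pi t0) P') A⁻¹ := by
    rw [← key, Matrix.vecMul_vecMul, hinv, Matrix.vecMul_one]
  have hPi0 : Matrix.vecMul (Matrix.vecMul (pi t0) P')
      (Matrix.of fun _ j => pi t0 j) = 0 := by
    funext j
    simp only [Matrix.vecMul, dotProduct, Matrix.of_apply]
    rw [← Finset.sum_mul]
    have : ∑ i, ∑ k, pi t0 k * P' k i = 0 := by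
      rw [Finset.sum_comm]
      simp only [← Finset.mul_sum]
      simp [hrowd]
    rw [this, zero_mul]
    rfl
  rw [← Matrix.vecMul_vecMul, hD, Matrix.vecMul_sub, hPi0, sub_zero, ← hpi'eq]
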